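/- Let N, L be positive natural numbers, K ∈ ℝ^{N×N} symmetric positive semidefinite, y : {1,…,N} → {1,…,L}, C : {1,…,N} → ℝ, e ∈ ℝ^{N×L}, and fix t with e_{tl} = 1 − δ_{l,y_t} for all l. Let D = {α ∈ ℝ^{N×L} : Σ_l α_{il} = 0 ∀i, α_{i,y_i} ≤ C_i ∀i, α_{il} ≤ 0 ∀i ∀l ≠ y_i}, W(α) = −(1/2)Σ_{i,j}Σ_l α_{il}α_{jl}K_{ij} − Σ_{i,l}α_{il}e_{il}. Suppose α maximizes W over D, α^t maximizes W over D^t := {α' ∈ D : α'_{tl} = 0 ∀l}, and t ∈ SV₁ := {i : 0 < α_{i,y_i} < C_i}. Assume: (i) β := α − α^t satisfies β_{il} = 0 for every i ∉ SV₁, and β attains the minimum in the span problem S_t² := min{ Σ_{i,j}(Σ_l β'_{il}β'_{jl})K_{ij} : β' ∈ ℝ^{N×L}, β'_{tl} = α_{tl} ∀l, Σ_l β'_{il} = 0 ∀i, β'_{il} = 0 ∀i ∉ SV₁ } (Assumption 1); (ii) for every i ≠ t there exist constants c_i, c_i^t ∈ ℝ with Σ_j α_{jl}K_{ij} + e_{il}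 = c_i and Σ_j α^t_{jl}K_{ij} + e_{il} = c_i^t for every l with β_{il} ≠ 0 (a consequence of Assumption 2). Then S_t² = Σ_{l=1}^L α_{tl}·Σ_{i=1}^N (α_{il} − α^t_{il}) K_{it}. -/
import Mathlib


/-- Theorem 1 of the MU-SVM paper: the span `S_t²` of a Type-1 support vector `t`
of the MU-SVM dual solution `α`, compared with the leave-one-out solution `αt`,
satisfies `S_t² = Σ_l α_{tl} Σ_i (α_{il} − αt_{il}) K_{it}`. -/
theorem stmt_3 {N L : ℕ} (hN : 0 < N) (hL : 0 < L)
    (K : Matrix (Fin N) (Fin N) ℝ) (hK : K.PosSemidef)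
    (y : Fin N → Fin L) (C : Fin N → ℝ) (e : Fin N → Fin L → ℝ) (t : Fin N)
    (he : ∀ l, e t l = 1 - (if l = y t then (1 : ℝ) else 0))
    (D : Set (Fin N → Fin L → ℝ))
    (hD : D = {a | (∀ i, ∑ l, a i l = 0) ∧ (∀ i, a i (y i) ≤ C i) ∧
      ∀ i, ∀ l, l ≠ y i → a i l ≤ 0})
    (W : (Fin N → Fin L → ℝ) → ℝ)
    (hW : ∀ a : Fin N → Fin L → ℝ,
      W a = -(1/2) * (∑ i, ∑ j, ∑ l, a i l * a j l * K i j) - ∑ i, ∑ l, a i l * e i l)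
    (α αt : Fin N → Fin L → ℝ)
    (hα : α ∈ D) (hαmax : ∀ a ∈ D, W a ≤ W α)
    (hαtD : αt ∈ D) (hαtzero : ∀ l, αt t l = 0)
    (hαtmax : ∀ a ∈ D, (∀ l, a t l = 0) → W a ≤ W αt)
    (SV1 : Set (Fin N)) (hSV1 : SV1 = {i | 0 < α i (y i) ∧ α i (y i) < C i})
    (htSV1 : t ∈ SV1)
    (β : Fin N → Fin L → ℝ) (hβ : ∀ i l, β i l = α i l - αt i l)
    (hβ0 : ∀ i ∉ SV1, ∀ l, β i l = 0)
    (St2 : ℝ)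
    (hSt2 : IsLeast {s : ℝ | ∃ β' : Fin N → Fin L → ℝ,
        (∀ l, β' t l = α t l) ∧ (∀ i, ∑ l, β' i l = 0) ∧ (∀ i ∉ SV1, ∀ l, β' i l = 0) ∧
        s = ∑ i, ∑ j, (∑ l, β' i l * β' j l) * K i j} St2)
    (hattain : St2 = ∑ i, ∑ j, (∑ l, β i l * β j l) * K i j)
    (hconst : ∀ i, i ≠ t → ∃ c ct : ℝ, ∀ l, β i l ≠ 0 →
        ((∑ j, α j l * K i j) + e i l = c) ∧ ((∑ j, αt j l * K i j) + e i l = ct)) :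
    St2 = ∑ l, α t l * (∑ i, (α i l - αt i l) * K i t) := by
  have hα1 : ∀ i, ∑ l, α i l = 0 := (hD ▸ hα).1
  have hαt1 : ∀ i, ∑ l, αt i l = 0 := (hD ▸ hαtD).1
  have hsym : ∀ i j, K i j = K j i := fun i j => by
    have := congrFun (congrFun hK.1.symm i) j
    simpa [Matrix.conjTranspose_apply] using this
  have hβsum : ∀ i, ∑ l, β i l = 0 := by
    intro i
    simp only [hβ, Finset.sum_sub_distrib, hα1 i, hαt1 i, sub_zero]
  have hrow : ∀ i, i ≠ t → ∑ j, (∑ l, β i l * β j l) * K i j = 0 := by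
    intro i hi
    obtain ⟨c, ct, hc⟩ := hconst i hi
    have h1 : ∑ j, (∑ l, β i l * β j l) * K i j
        = ∑ l, β i l * (∑ j, β j l * K i j) := by
      simp_rw [Finset.sum_mul, Finset.mul_sum]
      rw [Finset.sum_comm]
      apply Finset.sum_congr rfl; intro l _
      apply Finset.sum_congr rfl; intro j _; ring
    rw [h1]
    have key : ∀ l, β i l * (∑ j, β j l * K i j) = β i l * (c - ct) := by
      intro l
      by_cases h : β i l = 0
      · simp [h]
      · obtain ⟨hc1, hc2⟩ := hc l h
        have hsplit : ∑ j, β j l * K i j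
            = (∑ j, α j l * K i j) - ∑ j, αt j l * K i j := by
          simp [hβ, sub_mul, Finset.sum_sub_distrib]
        rw [hsplit]
        congr 1
        linarith
    simp_rw [key]
    rw [← Finset.sum_mul, hβsum i, zero_mul]
  rw [hattain]
  rw [Finset.sum_eq_single_of_mem t (Finset.mem_univ t) (fun j _ hj => hrow j hj)]
  have hβt : ∀ l, β t l = α t l := fun l => by rw [hβ, hαtzero, sub_zero]
  simp_rw [Finset.mul_sum, Finset.sum_mul]
  rw [Finset.sum_comm]
  apply Finset.sum_congr rfl; intro l _
  apply Finset.sum_congr rfl; intro j _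
  rw [hβt, hβ, hsym t j]; ring
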